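/- arXiv:0707.2056 — 3 statements merged into one kernel-verified Lean document; each statement's English description precedes it below -/
import Mathlib

section
/- For every function f : ℂ^{n+1} → ℝ of class C² and for every j = 1,…,n, the following pointwise identity holds: Σ_{ℓ,k=1}^{n+1} (∂σ_{j+1}/∂a_{ℓk̄})(∂∂̄f) · f_ℓ · f_{k̄} = − Σ_{1≤i_1<…<i_{j+1}≤n+1} Δ_{(i_1,…,i_{j+1})}(f). -/
open MeasureTheory Finset Complex ENNReal

noncomputable section

/-- `ℂ^{n+1}` with the Euclidean metric. -/
abbrev Cspace (n : ℕ) := EuclideanSpace ℂ (Fin (n + 1))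


/-- Real inner product structure on `ℂ^{n+1}` (restriction of scalars). -/
instance {n : ℕ} : InnerProductSpace ℝ (Cspace n) := InnerProductSpace.rclikeToReal ℂ _

instance {n : ℕ} : MeasurableSpace (Cspace n) := borel _

instance {n : ℕ} : BorelSpace (Cspace n) := ⟨rfl⟩

/-- Wirtinger derivative `∂g/∂z_j` of a complex valued function. -/
def zder {n : ℕ} (g : Cspace n → ℂ) (j : Fin (n + 1)) (z : Cspace n) : ℂ :=
  (fderiv ℝ g z (EuclideanSpace.single j 1) -
    Complex.I * fderiv ℝ g z (EuclideanSpace.single j Complex.I)) / 2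

/-- Wirtinger derivative `∂g/∂z̄_j` of a complex valued function. -/
def zbar {n : ℕ} (g : Cspace n → ℂ) (j : Fin (n + 1)) (z : Cspace n) : ℂ :=
  (fderiv ℝ g z (EuclideanSpace.single j 1) +
    Complex.I * fderiv ℝ g z (EuclideanSpace.single j Complex.I)) / 2

/-- `f_j = ∂f/∂z_j` for a real valued function. -/
def pder {n : ℕ} (f : Cspace n → ℝ) (j : Fin (n + 1)) (z : Cspace n) : ℂ :=
  zder (fun w => (f w : ℂ)) j z

/-- `|∂f| = (Σ_j |f_j|²)^{1/2}`. -/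
def pnorm {n : ℕ} (f : Cspace n → ℝ) (z : Cspace n) : ℝ :=
  Real.sqrt (∑ j, ‖pder f j z‖ ^ 2)

/-- The complex Hessian matrix `(f_{l k̄})`. -/
def hess {n : ℕ} (f : Cspace n → ℝ) (z : Cspace n) :
    Matrix (Fin (n + 1)) (Fin (n + 1)) ℂ :=
  Matrix.of fun l k => zder (fun w => zbar (fun u => (f u : ℂ)) k w) l z

/-- The bordered determinant `Δ_{(i_1,…,i_m)}(f)` for `s = {i_1 < … < i_m}`. -/
def borderedDet {n : ℕ} (f : Cspace n → ℝ) (s : Finset (Fin (n + 1))) (z : Cspace n) : ℂ :=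
  Matrix.det (Matrix.of fun p q : Option {i // i ∈ s} =>
    match p, q with
    | none, none => 0
    | none, some q => starRingEnd ℂ (pder f q.1 z)
    | some p, none => pder f p.1 z
    | some p, some q => hess f z p.1 q.1)

/-- `σ_m(A)`: the `m`-th elementary symmetric function of the eigenvalues of a
Hermitian matrix, expressed as the sum of all principal `m × m` minors. -/
def esymm {n : ℕ} (m : ℕ) (A : Matrix (Fin (n + 1)) (Fin (n + 1)) ℂ) : ℂ :=
  ∑ s ∈ Finset.univ.powersetCard m,
    Matrix.det (Matrix.of fun p q : {i // i ∈ s} => A p.1 q.1)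

/-- `∂σ_m/∂a_{l k̄}(A)`: partial derivative of `σ_m` as a polynomial in the entries. -/
def esymmDeriv {n : ℕ} (m : ℕ) (l k : Fin (n + 1))
    (A : Matrix (Fin (n + 1)) (Fin (n + 1)) ℂ) : ℂ :=
  deriv (fun t : ℂ => esymm m (A + t • Matrix.single l k 1)) 0

/-- The `j`-th Levi curvature of `{f = 0}` computed from the defining function `f`. -/
def leviK (n j : ℕ) (f : Cspace n → ℝ) (z : Cspace n) : ℝ :=
  -((n.choose j : ℝ))⁻¹ * ((pnorm f z) ^ (j + 2))⁻¹ *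
    (∑ s ∈ Finset.univ.powersetCard (j + 1), borderedDet f s z).re

/-- The real gradient `∇f`, written in complex coordinates. -/
def gradC {n : ℕ} (f : Cspace n → ℝ) (z : Cspace n) : Cspace n :=
  (WithLp.equiv 2 (Fin (n + 1) → ℂ)).symm fun k =>
    (fderiv ℝ f z (EuclideanSpace.single k 1) : ℂ) +
      (fderiv ℝ f z (EuclideanSpace.single k Complex.I) : ℝ) * Complex.I

/-- The divergence of a vector field on `ℂ^{n+1} ≅ ℝ^{2n+2}`. -/
def divC {n : ℕ} (V : Cspace n → Cspace n) (z : Cspace n) : ℝ :=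
  ∑ k, ((fderiv ℝ V z (EuclideanSpace.single k 1) k).re +
        (fderiv ℝ V z (EuclideanSpace.single k Complex.I) k).im)

/-- The Euclidean mean curvature `H = (1/(2n+1)) div(∇f/|∇f|)` of `{f = 0}`. -/
def meanCurvC (n : ℕ) (f : Cspace n → ℝ) (z : Cspace n) : ℝ :=
  (2 * n + 1 : ℝ)⁻¹ * divC (fun w => ‖gradC f w‖⁻¹ • gradC f w) z


section Helpers

variable {R : Type*} [CommRing R]

lemma my_det_updateRow_sum {n ι : Type*} [DecidableEq n] [Fintype n] [DecidableEq ι]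
    (M : Matrix n n R) (j : n) (t : Finset ι) (u : ι → n → R) :
    (M.updateRow j (∑ i ∈ t, u i)).det = ∑ i ∈ t, (M.updateRow j (u i)).det := by
  induction t using Finset.induction_on with
  | empty =>
    have h0 : (0 : n → R) = (0 : R) • (0 : n → R) := by simp
    rw [Finset.sum_empty, Finset.sum_empty, h0, Matrix.det_updateRow_smul]
    simp
  | insert _ _ h ih =>
    rw [Finset.sum_insert h, Matrix.det_updateRow_add, ih, Finset.sum_insert h]

lemma my_det_updateCol_sum {n ι : Type*} [DecidableEq n] [Fintype n] [DecidableEq ι]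
    (M : Matrix n n R) (j : n) (t : Finset ι) (u : ι → n → R) :
    (M.updateCol j (∑ i ∈ t, u i)).det = ∑ i ∈ t, (M.updateCol j (u i)).det := by
  induction t using Finset.induction_on with
  | empty =>
    have h0 : (0 : n → R) = (0 : R) • (0 : n → R) := by simp
    rw [Finset.sum_empty, Finset.sum_empty, h0, Matrix.det_updateCol_smul]
    simp
  | insert _ _ h ih =>
    rw [Finset.sum_insert h, Matrix.det_updateCol_add, ih, Finset.sum_insert h]

lemma my_det_bordered_unit {σ : Type*} [Fintype σ] [DecidableEq σ]
    (M : Matrix σ σ R) (p q : σ) :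
    (Matrix.of fun r t : Option σ =>
      Option.elim r (Option.elim t (0 : R) fun t' => if t' = q then 1 else 0)
        (fun r' => Option.elim t (if r' = p then 1 else 0) fun t' => M r' t')).det
      = -(M.updateRow p (Pi.single q 1)).det := by
  set C : Matrix (Option σ) (Option σ) R := Matrix.of fun r t : Option σ =>
      Option.elim r (Option.elim t (0 : R) fun t' => if t' = q then 1 else 0)
        (fun r' => Option.elim t (if r' = p then 1 else 0) fun t' => M r' t') with hC
  set τ : Equiv.Perm (Option σ) := Equiv.swap none (some q) with hτ
  have hsign : Equiv.Perm.sign τ = -1 := Equiv.Perm.sign_swap (by simp)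
  have h1 : (C.submatrix id τ).det = -C.det := by
    rw [Matrix.det_permute' τ C, hsign]; push_cast; ring
  set N : Matrix σ σ R := M.updateCol q (Pi.single p 1) with hN
  have hτn : τ none = some q := Equiv.swap_apply_left _ _
  have hτs : ∀ t : σ, τ (some t) = if t = q then none else some t := by
    intro t
    rw [hτ]
    by_cases h : t = q <;> simp [Equiv.swap_apply_def, h]
  have h2 : C.submatrix id τ =
      (Matrix.fromBlocks N (Matrix.of fun r (_ : Unit) => M r q) 0 1).submatrix
        (Equiv.optionEquivSumPUnit σ) (Equiv.optionEquivSumPUnit σ) := by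
    ext r t
    rcases r with _ | r <;> rcases t with _ | t
    · simp [hC, hτn, Equiv.optionEquivSumPUnit_none, Matrix.one_apply]
    · by_cases h : t = q <;>
        simp [hC, hτs, h, Equiv.optionEquivSumPUnit_none, Equiv.optionEquivSumPUnit_some]
    · simp [hC, hτn, hN, Equiv.optionEquivSumPUnit_none, Equiv.optionEquivSumPUnit_some,
        Matrix.updateCol_apply]
    · by_cases h : t = q <;>
        simp [hC, hτs, h, hN, Equiv.optionEquivSumPUnit_some, Matrix.updateCol_apply,
          Pi.single_apply]
  have h3 : (C.submatrix id τ).det = N.det := by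
    rw [h2, Matrix.det_submatrix_equiv_self, Matrix.det_fromBlocks_zero₂₁]
    simp
  have h4 : N.det = (M.updateRow p (Pi.single q 1)).det := by
    rw [hN, ← Matrix.det_transpose, ← Matrix.updateRow_transpose, ← Matrix.adjugate_apply,
      ← Matrix.adjugate_transpose, Matrix.transpose_apply, Matrix.adjugate_apply]
  have h5 := h1.symm.trans h3
  rw [h4] at h5
  linear_combination -h5

lemma my_esymmDeriv_eq {n : ℕ} (m : ℕ) (l k : Fin (n + 1))
    (A : Matrix (Fin (n + 1)) (Fin (n + 1)) ℂ) :
    esymmDeriv m l k A = ∑ s ∈ Finset.univ.powersetCard m,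
      if h : l ∈ s ∧ k ∈ s then
        ((Matrix.of fun p q : {i // i ∈ s} => A p.1 q.1).updateRow ⟨l, h.1⟩
          (Pi.single ⟨k, h.2⟩ 1)).det
      else 0 := by
  classical
  set S : ℂ := ∑ s ∈ Finset.univ.powersetCard m,
      if h : l ∈ s ∧ k ∈ s then
        ((Matrix.of fun p q : {i // i ∈ s} => A p.1 q.1).updateRow ⟨l, h.1⟩
          (Pi.single ⟨k, h.2⟩ 1)).det
      else 0 with hS
  have hfun : (fun t : ℂ => esymm m (A + t • Matrix.single l k 1)) =
      fun t => esymm m A + t * S := by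
    funext t
    rw [hS, Finset.mul_sum, esymm, esymm, ← Finset.sum_add_distrib]
    refine Finset.sum_congr rfl fun s _ => ?_
    by_cases h : l ∈ s ∧ k ∈ s
    · rw [dif_pos h]
      have key : (Matrix.of fun p q : {i // i ∈ s} =>
            (A + t • Matrix.single l k 1 :
              Matrix (Fin (n + 1)) (Fin (n + 1)) ℂ) p.1 q.1)
          = (Matrix.of fun p q : {i // i ∈ s} => A p.1 q.1).updateRow ⟨l, h.1⟩
              (((Matrix.of fun p q : {i // i ∈ s} => A p.1 q.1) ⟨l, h.1⟩)
                + t • (Pi.single (⟨k, h.2⟩ : {i // i ∈ s}) 1 : {i // i ∈ s} → ℂ)) := by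
        ext p q
        by_cases hp : p = (⟨l, h.1⟩ : {i // i ∈ s})
        · subst hp
          simp [Matrix.single, Pi.single_apply, Subtype.ext_iff, eq_comm]
        · have hp1 : ¬ l = p.1 := fun hc => hp (Subtype.ext hc.symm)
          simp [Matrix.updateRow_ne hp, Matrix.single, hp1]
      rw [key, Matrix.det_updateRow_add, Matrix.updateRow_eq_self, Matrix.det_updateRow_smul]
    · rw [dif_neg h, mul_zero, add_zero]
      congr 1
      ext p q
      have hc : ¬ (l = p.1 ∧ k = q.1) := by
        rintro ⟨h1, h2⟩
        exact h ⟨h1 ▸ p.2, h2 ▸ q.2⟩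
      simp [Matrix.single, hc]
  have hd : HasDerivAt (fun t : ℂ => esymm m A + t * S) S 0 := by
    simpa using ((hasDerivAt_id (0 : ℂ)).mul_const S).const_add (esymm m A)
  rw [esymmDeriv, hfun]
  exact hd.deriv

lemma my_bordered_expand {n : ℕ} (f : Cspace n → ℝ) (s : Finset (Fin (n + 1))) (z : Cspace n) :
    borderedDet f s z =
      -∑ p : {i // i ∈ s}, ∑ q : {i // i ∈ s},
        ((Matrix.of fun a b : {i // i ∈ s} => hess f z a.1 b.1).updateRow p
            (Pi.single q 1)).det * pder f p.1 z * starRingEnd ℂ (pder f q.1 z) := by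
  classical
  set M : Matrix {i // i ∈ s} {i // i ∈ s} ℂ :=
    Matrix.of fun a b => hess f z a.1 b.1 with hM
  set B : Matrix (Option {i // i ∈ s}) (Option {i // i ∈ s}) ℂ := Matrix.of fun p q =>
    match p, q with
    | none, none => 0
    | none, some q => starRingEnd ℂ (pder f q.1 z)
    | some p, none => pder f p.1 z
    | some p, some q => hess f z p.1 q.1 with hBdef
  have hB : borderedDet f s z = B.det := rfl
  have hcol : B = B.updateCol none
      (∑ p : {i // i ∈ s}, pder f p.1 z • (Pi.single (some p) 1 : Option {i // i ∈ s} → ℂ)) := by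
    ext r t
    rcases t with _ | t
    · rcases r with _ | r <;>
        simp [hBdef, Matrix.updateCol_apply, Finset.sum_apply, Pi.single_apply]
    · simp [Matrix.updateCol_apply]
  have step2 : ∀ p : {i // i ∈ s},
      (B.updateCol none (Pi.single (some p) (1 : ℂ))).det
        = ∑ q : {i // i ∈ s}, starRingEnd ℂ (pder f q.1 z) *
            (-(M.updateRow p (Pi.single q 1)).det) := by
    intro p
    set B1 := B.updateCol none (Pi.single (some p) (1 : ℂ)) with hB1
    have hrow : B1 = B1.updateRow none
        (∑ q : {i // i ∈ s}, starRingEnd ℂ (pder f q.1 z) • (Pi.single (some q) 1 : Option {i // i ∈ s} → ℂ)) := by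
      ext r t
      rcases r with _ | r
      · rcases t with _ | t <;>
          simp [hB1, hBdef, Matrix.updateRow_apply, Matrix.updateCol_apply,
            Finset.sum_apply, Pi.single_apply]
      · simp [Matrix.updateRow_apply]
    have hunit : ∀ q : {i // i ∈ s},
        B1.updateRow none (Pi.single (some q) (1 : ℂ)) =
          Matrix.of (fun r t : Option {i // i ∈ s} =>
            Option.elim r (Option.elim t (0 : ℂ) fun t' => if t' = q then 1 else 0)
              (fun r' => Option.elim t (if r' = p then 1 else 0) fun t' => M r' t')) := by
      intro q
      ext r t
      rcases r with _ | r <;> rcases t with _ | t <;>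
        simp [hB1, hBdef, hM, Matrix.updateRow_apply, Matrix.updateCol_apply,
          Pi.single_apply]
    rw [hrow, my_det_updateRow_sum]
    refine Finset.sum_congr rfl fun q _ => ?_
    rw [Matrix.det_updateRow_smul, hunit q, my_det_bordered_unit]
  rw [hB, hcol, my_det_updateCol_sum]
  have step3 : ∀ p : {i // i ∈ s},
      (B.updateCol none (pder f p.1 z • (Pi.single (some p) 1 : Option {i // i ∈ s} → ℂ))).det
        = pder f p.1 z * ∑ q : {i // i ∈ s}, starRingEnd ℂ (pder f q.1 z) *
            (-(M.updateRow p (Pi.single q 1)).det) := by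
    intro p
    rw [Matrix.det_updateCol_smul, step2 p]
  rw [Finset.sum_congr rfl fun p _ => step3 p, ← Finset.sum_neg_distrib]
  refine Finset.sum_congr rfl fun p _ => ?_
  rw [Finset.mul_sum, ← Finset.sum_neg_distrib]
  refine Finset.sum_congr rfl fun q _ => ?_
  ring

end Helpers

/-- **Lemma 2.1**: for every `C²` function `f : ℂ^{n+1} → ℝ` and every `j = 1, …, n`,
`Σ_{ℓ,k} (∂σ_{j+1}/∂a_{ℓk̄})(∂∂̄f) f_ℓ f_{k̄} = − Σ_{i_1<…<i_{j+1}} Δ_{(i_1,…,i_{j+1})}(f)`. -/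
theorem stmt6 (n j : ℕ) (hj1 : 1 ≤ j) (hjn : j ≤ n)
    (f : Cspace n → ℝ) (hf : ContDiff ℝ 2 f) (z : Cspace n) :
    ∑ l, ∑ k, esymmDeriv (j + 1) l k (hess f z) * pder f l z * starRingEnd ℂ (pder f k z) =
      -∑ s ∈ Finset.univ.powersetCard (j + 1), borderedDet f s z := by
  classical
  calc
    ∑ l, ∑ k, esymmDeriv (j + 1) l k (hess f z) * pder f l z * starRingEnd ℂ (pder f k z)
        = ∑ l, ∑ k, ∑ s ∈ Finset.univ.powersetCard (j + 1),
            (if h : l ∈ s ∧ k ∈ s then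
              ((Matrix.of fun p q : {i // i ∈ s} => hess f z p.1 q.1).updateRow ⟨l, h.1⟩
                (Pi.single ⟨k, h.2⟩ 1)).det
            else 0) * pder f l z * starRingEnd ℂ (pder f k z) := by
          refine Finset.sum_congr rfl fun l _ => Finset.sum_congr rfl fun k _ => ?_
          rw [my_esymmDeriv_eq, Finset.sum_mul, Finset.sum_mul]
    _ = ∑ s ∈ Finset.univ.powersetCard (j + 1), ∑ l, ∑ k,
            (if h : l ∈ s ∧ k ∈ s then
              ((Matrix.of fun p q : {i // i ∈ s} => hess f z p.1 q.1).updateRow ⟨l, h.1⟩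
                (Pi.single ⟨k, h.2⟩ 1)).det
            else 0) * pder f l z * starRingEnd ℂ (pder f k z) := by
          exact (Finset.sum_congr rfl fun l _ => Finset.sum_comm).trans Finset.sum_comm
    _ = -∑ s ∈ Finset.univ.powersetCard (j + 1), borderedDet f s z := by
          rw [← Finset.sum_neg_distrib]
          refine Finset.sum_congr rfl fun s _ => ?_
          rw [my_bordered_expand f s z, neg_neg]
          have houter : ∀ l : Fin (n + 1), l ∉ s →
              (∑ k, (if h : l ∈ s ∧ k ∈ s then
                ((Matrix.of fun p q : {i // i ∈ s} => hess f z p.1 q.1).updateRow ⟨l, h.1⟩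
                  (Pi.single ⟨k, h.2⟩ 1)).det
              else 0) * pder f l z * starRingEnd ℂ (pder f k z)) = 0 := by
            intro l hl
            refine Finset.sum_eq_zero fun k _ => ?_
            rw [dif_neg (fun hc => hl hc.1), zero_mul, zero_mul]
          rw [show (∑ l, ∑ k, (if h : l ∈ s ∧ k ∈ s then
                ((Matrix.of fun p q : {i // i ∈ s} => hess f z p.1 q.1).updateRow ⟨l, h.1⟩
                  (Pi.single ⟨k, h.2⟩ 1)).det
              else 0) * pder f l z * starRingEnd ℂ (pder f k z))
              = ∑ l ∈ s, ∑ k, (if h : l ∈ s ∧ k ∈ s then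
                ((Matrix.of fun p q : {i // i ∈ s} => hess f z p.1 q.1).updateRow ⟨l, h.1⟩
                  (Pi.single ⟨k, h.2⟩ 1)).det
              else 0) * pder f l z * starRingEnd ℂ (pder f k z) from
            (Finset.sum_subset (Finset.subset_univ s) fun l _ hl => houter l hl).symm]
          rw [← Finset.sum_attach s, Finset.univ_eq_attach]
          refine Finset.sum_congr rfl fun p _ => ?_
          have hinner : ∀ k : Fin (n + 1), k ∉ s →
              ((if h : p.1 ∈ s ∧ k ∈ s then
                ((Matrix.of fun a b : {i // i ∈ s} => hess f z a.1 b.1).updateRow ⟨p.1, h.1⟩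
                  (Pi.single ⟨k, h.2⟩ 1)).det
              else 0) * pder f p.1 z * starRingEnd ℂ (pder f k z)) = 0 := by
            intro k hk
            rw [dif_neg (fun hc => hk hc.2), zero_mul, zero_mul]
          rw [show (∑ k, (if h : p.1 ∈ s ∧ k ∈ s then
                ((Matrix.of fun a b : {i // i ∈ s} => hess f z a.1 b.1).updateRow ⟨p.1, h.1⟩
                  (Pi.single ⟨k, h.2⟩ 1)).det
              else 0) * pder f p.1 z * starRingEnd ℂ (pder f k z))
              = ∑ k ∈ s, (if h : p.1 ∈ s ∧ k ∈ s then
                ((Matrix.of fun a b : {i // i ∈ s} => hess f z a.1 b.1).updateRow ⟨p.1, h.1⟩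
                  (Pi.single ⟨k, h.2⟩ 1)).det
              else 0) * pder f p.1 z * starRingEnd ℂ (pder f k z) from
            (Finset.sum_subset (Finset.subset_univ s) fun k _ hk => hinner k hk).symm]
          rw [← Finset.sum_attach s]
          refine Finset.sum_congr rfl fun q _ => ?_
          rw [dif_pos ⟨p.2, q.2⟩]


end
end

section
/- The elementary symmetric functions of the complex Hessian are null Lagrangians: for every function f : ℂ^{n+1} → ℝ of class C³, every j = 1,…,n, and every k = 1,…,n+1, one has Σ_{ℓ=1}^{n+1} ∂_ℓ [ (∂σ_{j+1}/∂a_{ℓk̄})(∂∂̄f) ] = 0, where ∂_ℓ = ∂/∂z_ℓ. -/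
open MeasureTheory Finset Complex ENNReal

noncomputable section

section Helpers
open Matrix


/-- determinant as a continuous multilinear map in the rows. -/
def detCM (ι : Type*) [Fintype ι] [DecidableEq ι] :
    ContinuousMultilinearMap ℂ (fun _ : ι => ι → ℂ) ℂ where
  toMultilinearMap := (Matrix.detRowAlternating : (ι → ℂ) [⋀^ι]→ₗ[ℂ] ℂ).toMultilinearMap
  cont := by
    show Continuous fun v : (ι → ι → ℂ) => Matrix.det (Matrix.of fun i q => v i q)
    exact Continuous.matrix_det (continuous_matrix fun i j =>
      (continuous_apply j).comp (continuous_apply i))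

lemma detCM_apply {ι : Type*} [Fintype ι] [DecidableEq ι] (v : ι → ι → ℂ) :
    detCM ι v = Matrix.det (Matrix.of v) := rfl

lemma detCM_swap {ι : Type*} [Fintype ι] [DecidableEq ι] (x : ι → ι → ℂ)
    (a b : ι) (hab : a ≠ b) (u v : ι → ℂ) :
    detCM ι (Function.update (Function.update x a v) b u) =
      - detCM ι (Function.update (Function.update x a u) b v) := by
  have h : Function.update (Function.update x a v) b u =
      (Function.update (Function.update x a u) b v) ∘ Equiv.swap a b := by
    funext c
    rcases eq_or_ne c a with rfl | hca
    · simp [Function.update_apply, Equiv.swap_apply_left, hab, hab.symm]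
    · rcases eq_or_ne c b with rfl | hcb
      · simp [Function.update_apply, Equiv.swap_apply_right, hab, hab.symm]
      · simp [Function.update_apply, Equiv.swap_apply_of_ne_of_ne hca hcb, hca, hcb]
  rw [h]
  exact (Matrix.detRowAlternating : (ι → ℂ) [⋀^ι]→ₗ[ℂ] ℂ).map_swap _ hab

private lemma hess_hasFDerivAt {n : ℕ} (f : Cspace n → ℝ) (hf : ContDiff ℝ 3 f) (z : Cspace n) :
    ∃ Dh : Fin (n+1) → Fin (n+1) → (Cspace n →L[ℝ] ℂ),
      (∀ p q, HasFDerivAt (fun w => hess f w p q) (Dh p q) z) ∧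
      ∀ l p q, (Dh p q (EuclideanSpace.single l 1) -
          Complex.I * Dh p q (EuclideanSpace.single l Complex.I)) / 2 =
        (Dh l q (EuclideanSpace.single p 1) -
          Complex.I * Dh l q (EuclideanSpace.single p Complex.I)) / 2 := by
  have hfC : ContDiff ℝ 3 (fun w : Cspace n => ((f w : ℝ) : ℂ)) :=
    Complex.ofRealCLM.contDiff.comp hf
  set g : Fin (n+1) → Cspace n → ℂ := fun q w => zbar (fun u => ((f u : ℝ) : ℂ)) q w with hg_def
  have hg : ∀ q, ContDiff ℝ 2 (g q) := by
    intro q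
    have hD : ContDiff ℝ 2 (fderiv ℝ (fun w : Cspace n => ((f w : ℝ) : ℂ))) :=
      hfC.fderiv_right (by norm_num)
    have h1 : ContDiff ℝ 2 (fun w : Cspace n =>
        fderiv ℝ (fun w : Cspace n => ((f w : ℝ) : ℂ)) w (EuclideanSpace.single q 1)) :=
      by
        have := ((ContinuousLinearMap.apply ℝ ℂ (EuclideanSpace.single q 1) :
          (Cspace n →L[ℝ] ℂ) →L[ℝ] ℂ)).contDiff.comp hD
        exact this
    have h2 : ContDiff ℝ 2 (fun w : Cspace n =>
        fderiv ℝ (fun w : Cspace n => ((f w : ℝ) : ℂ)) w (EuclideanSpace.single q Complex.I)) :=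
      by
        have := ((ContinuousLinearMap.apply ℝ ℂ (EuclideanSpace.single q Complex.I) :
          (Cspace n →L[ℝ] ℂ) →L[ℝ] ℂ)).contDiff.comp hD
        exact this
    exact (h1.add (contDiff_const.mul h2)).div_const 2
  set F1 : Fin (n+1) → Cspace n → (Cspace n →L[ℝ] ℂ) := fun q => fderiv ℝ (g q) with hF1_def
  set F2 : Fin (n+1) → (Cspace n →L[ℝ] (Cspace n →L[ℝ] ℂ)) := fun q => fderiv ℝ (F1 q) z
    with hF2_def
  have hgd : ∀ q w, HasFDerivAt (g q) (F1 q w) w := fun q w =>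
    (((hg q).differentiable (by norm_num)) w).hasFDerivAt
  have hF1d : ∀ q, HasFDerivAt (F1 q) (F2 q) z := by
    intro q
    have : ContDiff ℝ 1 (F1 q) := (hg q).fderiv_right (by norm_num)
    exact ((this.differentiable one_ne_zero) z).hasFDerivAt
  have hsymm : ∀ q u v, F2 q u v = F2 q v u := fun q => second_derivative_symmetric (hgd q) (hF1d q)
  -- entrywise derivative of the hessian
  have key : ∀ p q, HasFDerivAt (fun w => hess f w p q)
      ((2:ℂ)⁻¹ • (((ContinuousLinearMap.apply ℝ ℂ (EuclideanSpace.single p 1)).comp (F2 q)) -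
        Complex.I • ((ContinuousLinearMap.apply ℝ ℂ
          (EuclideanSpace.single p Complex.I)).comp (F2 q)))) z := by
    intro p q
    have hA : HasFDerivAt (fun w => F1 q w (EuclideanSpace.single p 1))
        ((ContinuousLinearMap.apply ℝ ℂ (EuclideanSpace.single p 1)).comp (F2 q)) z :=
      by
        have := ((ContinuousLinearMap.apply ℝ ℂ (EuclideanSpace.single p 1) :
          (Cspace n →L[ℝ] ℂ) →L[ℝ] ℂ)).hasFDerivAt.comp z (hF1d q)
        exact this
    have hB : HasFDerivAt (fun w => F1 q w (EuclideanSpace.single p Complex.I))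
        ((ContinuousLinearMap.apply ℝ ℂ (EuclideanSpace.single p Complex.I)).comp (F2 q)) z :=
      by
        have := ((ContinuousLinearMap.apply ℝ ℂ (EuclideanSpace.single p Complex.I) :
          (Cspace n →L[ℝ] ℂ) →L[ℝ] ℂ)).hasFDerivAt.comp z (hF1d q)
        exact this
    have h := (hA.sub (hB.const_mul Complex.I)).const_mul ((2:ℂ)⁻¹)
    have heq : (fun w => (2:ℂ)⁻¹ * (F1 q w (EuclideanSpace.single p 1) -
        Complex.I * F1 q w (EuclideanSpace.single p Complex.I))) = fun w => hess f w p q := by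
      funext w
      show _ = zder (g q) p w
      rw [zder, hF1_def]
      try ring
    simp only [Pi.sub_apply] at h
    rw [heq] at h
    convert h using 1
  refine ⟨_, key, ?_⟩
  intro l p q
  simp only [ContinuousLinearMap.smul_apply, ContinuousLinearMap.sub_apply,
    ContinuousLinearMap.coe_comp', Function.comp_apply, ContinuousLinearMap.apply_apply,
    smul_eq_mul]
  rw [hsymm q (EuclideanSpace.single l 1) (EuclideanSpace.single p 1),
    hsymm q (EuclideanSpace.single l 1) (EuclideanSpace.single p Complex.I),
    hsymm q (EuclideanSpace.single l Complex.I) (EuclideanSpace.single p 1),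
    hsymm q (EuclideanSpace.single l Complex.I) (EuclideanSpace.single p Complex.I)]
  ring

private lemma esymmDeriv_eq {n : ℕ} (m : ℕ) (l k : Fin (n+1))
    (A : Matrix (Fin (n+1)) (Fin (n+1)) ℂ) :
    esymmDeriv m l k A = ∑ s ∈ Finset.univ.powersetCard m,
      (if h : l ∈ s ∧ k ∈ s then
        Matrix.det (Matrix.updateRow (Matrix.of fun p q : {i // i ∈ s} => A p.1 q.1)
          ⟨l, h.1⟩ (Pi.single ⟨k, h.2⟩ 1)) else 0) := by
  set c1 : ℂ := ∑ s ∈ Finset.univ.powersetCard m,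
      (if h : l ∈ s ∧ k ∈ s then
        Matrix.det (Matrix.updateRow (Matrix.of fun p q : {i // i ∈ s} => A p.1 q.1)
          ⟨l, h.1⟩ (Pi.single ⟨k, h.2⟩ 1)) else 0) with hc1
  have hfun : (fun t : ℂ => esymm m (A + t • Matrix.single l k 1)) =
      fun t => esymm m A + t * c1 := by
    funext t
    set B : Matrix (Fin (n+1)) (Fin (n+1)) ℂ := A + t • Matrix.single l k 1 with hBdef
    rw [esymm, esymm, hc1, Finset.mul_sum, ← Finset.sum_add_distrib]
    refine Finset.sum_congr rfl fun s _ => ?_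
    by_cases h : l ∈ s ∧ k ∈ s
    · rw [dif_pos h]
      have hB : ∀ p q : Fin (n+1), B p q
          = A p q + t * (if l = p ∧ k = q then 1 else 0) := by
        intro p q
        rw [hBdef]
        simp [Matrix.single]
      have hM : (Matrix.of fun p q : {i // i ∈ s} => B p.1 q.1)
          = Matrix.updateRow (Matrix.of fun p q : {i // i ∈ s} => A p.1 q.1) ⟨l, h.1⟩
              ((Matrix.of fun p q : {i // i ∈ s} => A p.1 q.1) ⟨l, h.1⟩ +
                t • (Pi.single (⟨k, h.2⟩ : {i // i ∈ s}) (1:ℂ) : {i // i ∈ s} → ℂ)) := by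
        ext p q
        rw [Matrix.of_apply, hB]
        by_cases hp : p = ⟨l, h.1⟩
        · subst hp
          by_cases hq : q = ⟨k, h.2⟩
          · subst hq
            simp [Pi.single_apply]
          · have hq' : q.1 ≠ k := fun hh => hq (Subtype.ext hh)
            have hcond : ¬(l = ((⟨l, h.1⟩ : {i // i ∈ s}) : Fin (n+1)) ∧ k = q.1) :=
              fun hh => hq' hh.2.symm
            rw [if_neg hcond, Matrix.updateRow_self]
            simp [Pi.single_apply, hq]
        · have hp' : p.1 ≠ l := fun hh => hp (Subtype.ext hh)
          have hcond : ¬(l = p.1 ∧ k = q.1) := fun hh => hp' hh.1.symm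
          rw [if_neg hcond, Matrix.updateRow_ne hp]
          simp
      rw [hM, Matrix.det_updateRow_add, Matrix.det_updateRow_smul, Matrix.updateRow_eq_self]
      try simp [smul_eq_mul]
    · rw [dif_neg h]
      have hM : (Matrix.of fun p q : {i // i ∈ s} => B p.1 q.1)
          = Matrix.of fun p q : {i // i ∈ s} => A p.1 q.1 := by
        ext p q
        have hB : B p.1 q.1
            = A p.1 q.1 + t * (if l = p.1 ∧ k = q.1 then 1 else 0) := by
          rw [hBdef]
          simp [Matrix.single]
        have hnot : ¬(l = p.1 ∧ k = q.1) := by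
          rintro ⟨rfl, rfl⟩
          exact h ⟨p.2, q.2⟩
        rw [Matrix.of_apply, hB]
        simp [hnot]
      rw [hM]; ring
  rw [esymmDeriv, hfun]
  have : HasDerivAt (fun t : ℂ => esymm m A + t * c1) c1 0 := by
    simpa using ((hasDerivAt_id (0:ℂ)).mul_const c1).const_add (esymm m A)
  exact this.deriv

end Helpers

private lemma zder_const {n : ℕ} (c : ℂ) (j : Fin (n+1)) (z : Cspace n) :
    zder (fun _ => c) j z = 0 := by
  simp [zder]

private lemma zder_sum {n : ℕ} {α : Type*} (S : Finset α) (F : α → Cspace n → ℂ)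
    (j : Fin (n+1)) (z : Cspace n) (h : ∀ a ∈ S, DifferentiableAt ℝ (F a) z) :
    zder (fun w => ∑ a ∈ S, F a w) j z = ∑ a ∈ S, zder (F a) j z := by
  unfold zder
  rw [fderiv_fun_sum h]
  simp only [ContinuousLinearMap.coe_sum', Finset.sum_apply]
  rw [Finset.mul_sum, ← Finset.sum_sub_distrib, Finset.sum_div]

open Matrix in
private lemma key_s {n : ℕ} (f : Cspace n → ℝ) (z : Cspace n)
    (Dh : Fin (n+1) → Fin (n+1) → (Cspace n →L[ℝ] ℂ))
    (hDh : ∀ p q, HasFDerivAt (fun w => hess f w p q) (Dh p q) z)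
    (hsym : ∀ l p q, (Dh p q (EuclideanSpace.single l 1) -
        Complex.I * Dh p q (EuclideanSpace.single l Complex.I)) / 2 =
      (Dh l q (EuclideanSpace.single p 1) -
        Complex.I * Dh l q (EuclideanSpace.single p Complex.I)) / 2)
    (k : Fin (n+1)) (s : Finset (Fin (n+1))) (hk : k ∈ s) :
    (∀ l' : {i // i ∈ s}, DifferentiableAt ℝ (fun w =>
        Matrix.det (Matrix.updateRow (Matrix.of fun p q : {i // i ∈ s} => hess f w p.1 q.1)
          l' (Pi.single (⟨k, hk⟩ : {i // i ∈ s}) (1:ℂ)))) z) ∧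
    ∑ l' : {i // i ∈ s}, zder (fun w =>
        Matrix.det (Matrix.updateRow (Matrix.of fun p q : {i // i ∈ s} => hess f w p.1 q.1)
          l' (Pi.single (⟨k, hk⟩ : {i // i ∈ s}) (1:ℂ)))) l'.1 z = 0 := by
  classical
  set δ : {i // i ∈ s} → ℂ := Pi.single (⟨k, hk⟩ : {i // i ∈ s}) (1:ℂ) with hδ
  set M0f : {i // i ∈ s} → {i // i ∈ s} → ℂ := fun p q => hess f z p.1 q.1 with hM0f
  set bval : Fin (n+1) → Fin (n+1) → Fin (n+1) → ℂ := fun l p q =>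
    (Dh p q (EuclideanSpace.single l 1) -
      Complex.I * Dh p q (EuclideanSpace.single l Complex.I)) / 2 with hbval
  set G : {i // i ∈ s} → {i // i ∈ s} → ℂ := fun l' i => if i = l' then 0 else
    detCM {i // i ∈ s} (Function.update (Function.update M0f l' δ) i
      (fun q => bval l'.1 i.1 q.1)) with hG
  have main : ∀ l' : {i // i ∈ s},
      DifferentiableAt ℝ (fun w =>
        Matrix.det (Matrix.updateRow (Matrix.of fun p q : {i // i ∈ s} => hess f w p.1 q.1)
          l' δ)) z ∧
      zder (fun w =>
        Matrix.det (Matrix.updateRow (Matrix.of fun p q : {i // i ∈ s} => hess f w p.1 q.1)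
          l' δ)) l'.1 z = ∑ i : {i // i ∈ s}, G l' i := by
    intro l'
    set g : {i // i ∈ s} → Cspace n → ({i // i ∈ s} → ℂ) := fun i w =>
      if i = l' then δ else fun q => hess f w i.1 q.1 with hg
    set g' : {i // i ∈ s} → (Cspace n →L[ℝ] ({i // i ∈ s} → ℂ)) := fun i =>
      if i = l' then 0 else ContinuousLinearMap.pi (fun q : {i // i ∈ s} => Dh i.1 q.1) with hg'
    have hgd : ∀ i, HasFDerivAt (g i) (g' i) z := by
      intro i
      by_cases hi : i = l'
      · rw [hg, hg']; simp only [if_pos hi]; exact hasFDerivAt_const δ z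
      · rw [hg, hg']; simp only [if_neg hi]
        exact hasFDerivAt_pi.2 (fun q => hDh i.1 q.1)
    have hFd := HasFDerivAt.multilinear_comp ((detCM {i // i ∈ s}).restrictScalars ℝ) hgd
    have hfun : (fun w => ((detCM {i // i ∈ s}).restrictScalars ℝ) (fun i => g i w)) =
        (fun w => Matrix.det (Matrix.updateRow
          (Matrix.of fun p q : {i // i ∈ s} => hess f w p.1 q.1) l' δ)) := by
      funext w
      show detCM {i // i ∈ s} (fun i => g i w) = _
      rw [detCM_apply]
      congr 1
      ext i q
      by_cases hi : i = l'
      · subst hi; rw [hg]; simp [Matrix.updateRow_self]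
      · rw [hg]; simp [if_neg hi, Matrix.updateRow_ne hi]
    rw [hfun] at hFd
    refine ⟨hFd.differentiableAt, ?_⟩
    rw [zder, hFd.fderiv]
    have hx : (fun j => g j z) = Function.update M0f l' δ := by
      funext j
      rw [hg, Function.update_apply, hM0f]
    have hval : ∀ u : Cspace n,
        (∑ i : {i // i ∈ s},
          ((((detCM {i // i ∈ s}).restrictScalars ℝ).toContinuousLinearMap (fun j => g j z) i)
            ∘L (g' i))) u
        = ∑ i : {i // i ∈ s},
            detCM {i // i ∈ s} (Function.update (Function.update M0f l' δ) i (g' i u)) := by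
      intro u
      rw [ContinuousLinearMap.sum_apply]
      refine Finset.sum_congr rfl fun i _ => ?_
      rw [ContinuousLinearMap.comp_apply, ContinuousMultilinearMap.toContinuousLinearMap_apply,
        ContinuousMultilinearMap.coe_restrictScalars, hx]
    rw [hval, hval]
    rw [Finset.mul_sum, ← Finset.sum_sub_distrib, Finset.sum_div]
    refine Finset.sum_congr rfl fun i _ => ?_
    by_cases hi : i = l'
    · subst hi
      rw [hG, hg']
      simp only [eq_self_iff_true, if_true, ContinuousLinearMap.zero_apply]
      rw [ContinuousMultilinearMap.map_coord_zero _ i (Function.update_self i 0 _)]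
      simp
    · rw [hG]
      simp only [if_neg hi]
      rw [hg']
      simp only [if_neg hi]
      have hrow : (fun q : {i // i ∈ s} => bval l'.1 i.1 q.1) =
          (2:ℂ)⁻¹ • ((fun q : {i // i ∈ s} => Dh i.1 q.1 (EuclideanSpace.single l'.1 1)) -
            Complex.I • (fun q : {i // i ∈ s} =>
              Dh i.1 q.1 (EuclideanSpace.single l'.1 Complex.I))) := by
        funext q
        rw [hbval]
        simp only [Pi.smul_apply, Pi.sub_apply, smul_eq_mul]
        ring
      rw [hrow, ContinuousMultilinearMap.map_update_smul, ContinuousMultilinearMap.map_update_sub,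
        ContinuousMultilinearMap.map_update_smul]
      have hpi : ∀ u, (ContinuousLinearMap.pi (fun q : {i // i ∈ s} => Dh i.1 q.1)) u
          = fun q : {i // i ∈ s} => Dh i.1 q.1 u := by
        intro u; rfl
      rw [hpi, hpi]
      simp only [smul_eq_mul]
      ring
  have hGanti : ∀ l' i, G i l' = - G l' i := by
    intro l' i
    by_cases hi : i = l'
    · subst hi; simp [hG]
    · rw [hG]
      simp only [if_neg hi, if_neg (Ne.symm hi)]
      have hb : (fun q : {i // i ∈ s} => bval i.1 l'.1 q.1) =
          (fun q : {i // i ∈ s} => bval l'.1 i.1 q.1) := by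
        funext q
        rw [hbval]
        exact hsym i.1 l'.1 q.1
      rw [hb, Function.update_comm hi]
      exact detCM_swap M0f l' i (Ne.symm hi) δ (fun q => bval l'.1 i.1 q.1)
  refine ⟨fun l' => (main l').1, ?_⟩
  have hsum : ∑ l' : {i // i ∈ s}, zder (fun w =>
      Matrix.det (Matrix.updateRow (Matrix.of fun p q : {i // i ∈ s} => hess f w p.1 q.1)
        l' δ)) l'.1 z = ∑ l' : {i // i ∈ s}, ∑ i : {i // i ∈ s}, G l' i :=
    Finset.sum_congr rfl fun l' _ => (main l').2
  rw [hsum]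
  have h1 : ∑ l' : {i // i ∈ s}, ∑ i : {i // i ∈ s}, G l' i
      = ∑ i : {i // i ∈ s}, ∑ l' : {i // i ∈ s}, G l' i := Finset.sum_comm
  have h2 : ∑ i : {i // i ∈ s}, ∑ l' : {i // i ∈ s}, G l' i
      = - ∑ i : {i // i ∈ s}, ∑ l' : {i // i ∈ s}, G i l' := by
    rw [← Finset.sum_neg_distrib]
    refine Finset.sum_congr rfl fun i _ => ?_
    rw [← Finset.sum_neg_distrib]
    exact Finset.sum_congr rfl fun l' _ => hGanti i l'
  have h3 := h1.trans h2
  linear_combination (2⁻¹ : ℂ) * h3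


/-- **Null Lagrangian property** (formula (2.2)): for every `C³` function
`f : ℂ^{n+1} → ℝ`, `Σ_ℓ ∂_ℓ [(∂σ_{j+1}/∂a_{ℓk̄})(∂∂̄f)] = 0` for every `k`. -/
theorem stmt7 (n j : ℕ) (hj1 : 1 ≤ j) (hjn : j ≤ n)
    (f : Cspace n → ℝ) (hf : ContDiff ℝ 3 f) (k : Fin (n + 1)) (z : Cspace n) :
    ∑ l, zder (fun w => esymmDeriv (j + 1) l k (hess f w)) l z = 0 := by
  classical
  obtain ⟨Dh, hDh, hsym⟩ := hess_hasFDerivAt f hf z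
  have hrw : ∀ l : Fin (n+1), (fun w => esymmDeriv (j + 1) l k (hess f w)) =
      fun w => ∑ s ∈ Finset.univ.powersetCard (j+1),
        (if h : l ∈ s ∧ k ∈ s then
          Matrix.det (Matrix.updateRow (Matrix.of fun p q : {i // i ∈ s} => hess f w p.1 q.1)
            ⟨l, h.1⟩ (Pi.single (⟨k, h.2⟩ : {i // i ∈ s}) (1:ℂ))) else 0) := by
    intro l
    funext w
    exact esymmDeriv_eq (j+1) l k (hess f w)
  have hdiffs : ∀ l : Fin (n+1), ∀ s ∈ Finset.univ.powersetCard (j+1),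
      DifferentiableAt ℝ (fun w =>
        (if h : l ∈ s ∧ k ∈ s then
          Matrix.det (Matrix.updateRow (Matrix.of fun p q : {i // i ∈ s} => hess f w p.1 q.1)
            ⟨l, h.1⟩ (Pi.single (⟨k, h.2⟩ : {i // i ∈ s}) (1:ℂ))) else 0)) z := by
    intro l s _
    by_cases h : l ∈ s ∧ k ∈ s
    · have hd := (key_s f z Dh hDh hsym k s h.2).1 ⟨l, h.1⟩
      have heq : (fun w =>
          (if h : l ∈ s ∧ k ∈ s then
            Matrix.det (Matrix.updateRow (Matrix.of fun p q : {i // i ∈ s} => hess f w p.1 q.1)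
              ⟨l, h.1⟩ (Pi.single (⟨k, h.2⟩ : {i // i ∈ s}) (1:ℂ))) else 0)) = (fun w =>
          Matrix.det (Matrix.updateRow (Matrix.of fun p q : {i // i ∈ s} => hess f w p.1 q.1)
              (⟨l, h.1⟩ : {i // i ∈ s}) (Pi.single (⟨k, h.2⟩ : {i // i ∈ s}) (1:ℂ)))) :=
        funext fun w => dif_pos h
      rw [heq]
      exact hd
    · have heq : (fun w =>
          (if h : l ∈ s ∧ k ∈ s then
            Matrix.det (Matrix.updateRow (Matrix.of fun p q : {i // i ∈ s} => hess f w p.1 q.1)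
              ⟨l, h.1⟩ (Pi.single (⟨k, h.2⟩ : {i // i ∈ s}) (1:ℂ))) else 0)) =
          (fun _ => (0:ℂ)) := funext fun w => dif_neg h
      rw [heq]
      exact differentiableAt_const 0
  have step1 : ∀ l : Fin (n+1), zder (fun w => esymmDeriv (j + 1) l k (hess f w)) l z
      = ∑ s ∈ Finset.univ.powersetCard (j+1), zder (fun w =>
          (if h : l ∈ s ∧ k ∈ s then
            Matrix.det (Matrix.updateRow (Matrix.of fun p q : {i // i ∈ s} => hess f w p.1 q.1)
              ⟨l, h.1⟩ (Pi.single (⟨k, h.2⟩ : {i // i ∈ s}) (1:ℂ))) else 0)) l z := by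
    intro l
    rw [hrw l]
    exact zder_sum _ _ l z (hdiffs l)
  rw [Finset.sum_congr rfl fun l _ => step1 l, Finset.sum_comm]
  refine Finset.sum_eq_zero fun s hs => ?_
  by_cases hks : k ∈ s
  · have hvanish : ∀ l ∈ (Finset.univ : Finset (Fin (n+1))), l ∉ s → zder (fun w =>
        (if h : l ∈ s ∧ k ∈ s then
          Matrix.det (Matrix.updateRow (Matrix.of fun p q : {i // i ∈ s} => hess f w p.1 q.1)
            ⟨l, h.1⟩ (Pi.single (⟨k, h.2⟩ : {i // i ∈ s}) (1:ℂ))) else 0)) l z = 0 := by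
      intro l _ hl
      have heq : (fun w =>
          (if h : l ∈ s ∧ k ∈ s then
            Matrix.det (Matrix.updateRow (Matrix.of fun p q : {i // i ∈ s} => hess f w p.1 q.1)
              ⟨l, h.1⟩ (Pi.single (⟨k, h.2⟩ : {i // i ∈ s}) (1:ℂ))) else 0)) =
          (fun _ => (0:ℂ)) := funext fun w => dif_neg (fun hh => hl hh.1)
      rw [heq]
      exact zder_const 0 l z
    rw [← Finset.sum_subset (Finset.subset_univ s) hvanish]
    rw [← Finset.sum_attach s]
    have hcongr : ∀ l' ∈ s.attach, zder (fun w =>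
        (if h : l'.1 ∈ s ∧ k ∈ s then
          Matrix.det (Matrix.updateRow (Matrix.of fun p q : {i // i ∈ s} => hess f w p.1 q.1)
            ⟨l'.1, h.1⟩ (Pi.single (⟨k, h.2⟩ : {i // i ∈ s}) (1:ℂ))) else 0)) l'.1 z
        = zder (fun w =>
          Matrix.det (Matrix.updateRow (Matrix.of fun p q : {i // i ∈ s} => hess f w p.1 q.1)
            l' (Pi.single (⟨k, hks⟩ : {i // i ∈ s}) (1:ℂ)))) l'.1 z := by
      intro l' _
      congr 1
      funext w
      rw [dif_pos ⟨l'.2, hks⟩]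
    rw [Finset.sum_congr rfl hcongr]
    have hz := (key_s f z Dh hDh hsym k s hks).2
    rwa [Finset.univ_eq_attach] at hz
  · refine Finset.sum_eq_zero fun l _ => ?_
    have heq : (fun w =>
        (if h : l ∈ s ∧ k ∈ s then
          Matrix.det (Matrix.updateRow (Matrix.of fun p q : {i // i ∈ s} => hess f w p.1 q.1)
            ⟨l, h.1⟩ (Pi.single (⟨k, h.2⟩ : {i // i ∈ s}) (1:ℂ))) else 0)) =
        (fun _ => (0:ℂ)) := funext fun w => dif_neg (fun hh => hks hh.2)
    rw [heq]
    exact zder_const 0 l z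
end
end

section
/- Maclaurin–Newton inequality for Hermitian matrices: for every (n+1)×(n+1) positive semidefinite Hermitian matrix A and every j = 2,…,n+1, one has σ_j(A) ≤ C(n+1, j) · (trace(A)/(n+1))^j, and equality holds if and only if A is a scalar multiple of the identity matrix. -/
open MeasureTheory Finset Complex ENNReal

noncomputable section

section AuxProofs

section MatP
open Polynomial
namespace MatAux

variable {ι : Type*} [DecidableEq ι] [Fintype ι]

/-- principal minor -/
def mnr {R : Type*} [CommRing R] (A : Matrix ι ι R) (s : Finset ι) : R :=
  Matrix.det (Matrix.of fun p q : {i // i ∈ s} => A p.1 q.1)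

lemma det_piecewise_one {R : Type*} [CommRing R] (A : Matrix ι ι R) (s : Finset ι) :
    Matrix.det (Matrix.of (s.piecewise A (1 : Matrix ι ι R)) : Matrix ι ι R) = mnr A s := by
  classical
  set M : Matrix ι ι R := Matrix.of (s.piecewise A (1 : Matrix ι ι R))
  let e : {i // i ∈ s} ⊕ {i // ¬ i ∈ s} ≃ ι := Equiv.sumCompl (· ∈ s)
  have hsub : M.submatrix e e =
      Matrix.fromBlocks (Matrix.of fun p q : {i // i ∈ s} => A p.1 q.1)
        (Matrix.of fun (p : {i // i ∈ s}) (q : {i // ¬ i ∈ s}) => A p.1 q.1)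
        0 (1 : Matrix {i // ¬ i ∈ s} {i // ¬ i ∈ s} R) := by
    ext p q
    cases p with
    | inl p =>
      cases q with
      | inl q =>
        simp [M, e, Matrix.submatrix, Finset.piecewise, p.2]
      | inr q =>
        simp [M, e, Matrix.submatrix, Finset.piecewise, p.2]
    | inr p =>
      cases q with
      | inl q =>
        have : p.1 ≠ q.1 := fun h => p.2 (h ▸ q.2)
        simp [M, e, Matrix.submatrix, Finset.piecewise, p.2, Matrix.one_apply, this,
          Subtype.ext_iff]
      | inr q =>
        simp [M, e, Matrix.submatrix, Finset.piecewise, p.2, Matrix.one_apply, Subtype.ext_iff]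
        exact if_congr Iff.rfl rfl rfl
  calc M.det = (M.submatrix e e).det := (Matrix.det_submatrix_equiv_self e M).symm
    _ = mnr A s := by rw [hsub, Matrix.det_fromBlocks_zero₂₁, Matrix.det_one, mul_one]; rfl


lemma det_add_expand {R : Type*} [CommRing R] (A B : Matrix ι ι R) :
    (A + B).det = ∑ s : Finset ι, Matrix.det (Matrix.of (s.piecewise A B) : Matrix ι ι R) := by
  classical
  exact (Matrix.detRowAlternating : (ι → R) [⋀^ι]→ₗ[R] R).toMultilinearMap.map_add_univ A B

lemma det_poly (A : Matrix ι ι ℂ) :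
    (A.map (Polynomial.C) + ((Polynomial.X : ℂ[X]) • 1 : Matrix ι ι ℂ[X])).det
      = ∑ s : Finset ι, Polynomial.C (mnr A s) * Polynomial.X ^ (Fintype.card ι - s.card) := by
  rw [det_add_expand]
  refine Finset.sum_congr rfl fun s _ => ?_
  have hrow : ∀ i, s.piecewise (A.map Polynomial.C) (((Polynomial.X : ℂ[X]) • 1 : Matrix ι ι ℂ[X])) i
      = (if i ∈ s then (1:ℂ[X]) else Polynomial.X) •
          (s.piecewise (A.map Polynomial.C) (1 : Matrix ι ι ℂ[X]) i) := by
    intro i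
    by_cases hi : i ∈ s
    · simp only [Finset.piecewise, if_pos hi, one_smul]
    · simp only [Finset.piecewise, if_neg hi]
      funext j
      rw [Matrix.smul_apply, Pi.smul_apply]
  have hprod : (∏ i, (if i ∈ s then (1:ℂ[X]) else Polynomial.X))
      = Polynomial.X ^ (Fintype.card ι - s.card) := by
    rw [← Finset.prod_filter_mul_prod_filter_not Finset.univ (· ∈ s)]
    have h1 : (∏ x ∈ Finset.univ.filter (· ∈ s), if x ∈ s then (1:ℂ[X]) else Polynomial.X) = 1 :=
      Finset.prod_eq_one fun x hx => if_pos (Finset.mem_filter.mp hx).2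
    have h2 : (∏ x ∈ Finset.univ.filter (· ∉ s), if x ∈ s then (1:ℂ[X]) else Polynomial.X)
        = Polynomial.X ^ (Fintype.card ι - s.card) := by
      have hflt : Finset.univ.filter (· ∉ s) = sᶜ := by ext x; simp
      rw [Finset.prod_congr rfl (fun x hx => if_neg (Finset.mem_filter.mp hx).2),
        Finset.prod_const, hflt, Finset.card_compl]
    rw [h1, h2, one_mul]
  have hmnr : mnr (A.map Polynomial.C) s = Polynomial.C (mnr A s) := by
    rw [mnr, mnr]
    exact ((Polynomial.C : ℂ →+* ℂ[X]).map_det _).symm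
  calc Matrix.det (Matrix.of (s.piecewise (A.map Polynomial.C) (((Polynomial.X : ℂ[X]) • 1 : Matrix ι ι ℂ[X]))))
      = Matrix.detRowAlternating (fun i => (if i ∈ s then (1:ℂ[X]) else Polynomial.X) •
          (s.piecewise (A.map Polynomial.C) (1 : Matrix ι ι ℂ[X]) i)) := by
        show Matrix.detRowAlternating _ = _
        congr 1
        funext i
        exact hrow i
    _ = (∏ i, (if i ∈ s then (1:ℂ[X]) else Polynomial.X)) •
          Matrix.detRowAlternating (s.piecewise (A.map Polynomial.C) (1 : Matrix ι ι ℂ[X])) :=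
        (Matrix.detRowAlternating :
          (ι → ℂ[X]) [⋀^ι]→ₗ[ℂ[X]] ℂ[X]).toMultilinearMap.map_smul_univ _ _
    _ = Polynomial.X ^ (Fintype.card ι - s.card) *
          Matrix.det (Matrix.of (s.piecewise (A.map Polynomial.C) (1 : Matrix ι ι ℂ[X]))) := by
        rw [hprod, smul_eq_mul]; rfl
    _ = Polynomial.C (mnr A s) * Polynomial.X ^ (Fintype.card ι - s.card) := by
        rw [det_piecewise_one, hmnr]; ring


lemma coeff_det_poly (A : Matrix ι ι ℂ) {j : ℕ} (hj : j ≤ Fintype.card ι) :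
    ((A.map (Polynomial.C) + (Polynomial.X : ℂ[X]) • 1).det).coeff (Fintype.card ι - j)
      = ∑ s ∈ Finset.univ.powersetCard j, mnr A s := by
  rw [det_poly, Polynomial.finset_sum_coeff]
  have hterm : ∀ s : Finset ι,
      (Polynomial.C (mnr A s) * Polynomial.X ^ (Fintype.card ι - s.card)).coeff
        (Fintype.card ι - j) = if s.card = j then mnr A s else 0 := by
    intro s
    rw [Polynomial.coeff_C_mul, Polynomial.coeff_X_pow]
    have hcard : s.card ≤ Fintype.card ι := by
      simpa using Finset.card_le_univ s
    by_cases h : s.card = j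
    · rw [if_pos h, if_pos (by omega), mul_one]
    · rw [if_neg h, if_neg (by omega), mul_zero]
  rw [Finset.sum_congr rfl fun s _ => hterm s, Finset.sum_ite, Finset.sum_const_zero, add_zero]
  apply Finset.sum_congr _ fun _ _ => rfl
  rw [Finset.powersetCard_eq_filter, Finset.powerset_univ]

lemma det_poly_conj (U W A : Matrix ι ι ℂ) (hUW : U * W = 1) :
    ((U * A * W).map (Polynomial.C) + (Polynomial.X : ℂ[X]) • 1).det
      = (A.map (Polynomial.C) + (Polynomial.X : ℂ[X]) • 1).det := by
  have hmap1 : (U.map (Polynomial.C)) * (W.map (Polynomial.C)) = 1 := by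
    rw [← Matrix.map_mul, hUW, Matrix.map_one _ (map_zero _) (map_one _)]
  have hfac : (U * A * W).map (Polynomial.C) + (Polynomial.X : ℂ[X]) • 1
      = (U.map (Polynomial.C)) * (A.map (Polynomial.C) + (Polynomial.X : ℂ[X]) • 1)
          * (W.map (Polynomial.C)) := by
    rw [Matrix.mul_add, Matrix.add_mul, Matrix.map_mul, Matrix.map_mul]
    congr 1
    rw [mul_smul_comm, mul_one, Matrix.smul_mul, hmap1]
  rw [hfac, Matrix.det_mul, Matrix.det_mul]
  calc (U.map (Polynomial.C)).det * (A.map (Polynomial.C) + (Polynomial.X : ℂ[X]) • 1).det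
        * (W.map (Polynomial.C)).det
      = ((U.map (Polynomial.C)).det * (W.map (Polynomial.C)).det)
          * (A.map (Polynomial.C) + (Polynomial.X : ℂ[X]) • 1).det := by ring
    _ = _ := by rw [← Matrix.det_mul, hmap1, Matrix.det_one, one_mul]

lemma mnr_diagonal (f : ι → ℂ) (s : Finset ι) :
    mnr (Matrix.diagonal f) s = ∏ i ∈ s, f i := by
  rw [mnr]
  have hdg : (Matrix.of fun p q : {i // i ∈ s} => Matrix.diagonal f p.1 q.1)
      = Matrix.diagonal (fun p : {i // i ∈ s} => f p.1) := by
    ext p q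
    by_cases h : p = q
    · subst h; simp
    · rw [Matrix.of_apply, Matrix.diagonal_apply_ne _ (fun hc => h (Subtype.ext hc)),
        Matrix.diagonal_apply_ne _ h]
  rw [hdg, Matrix.det_diagonal]
  exact Finset.prod_coe_sort s f

lemma sum_mnr_conj_diag (U A : Matrix ι ι ℂ) (f : ι → ℂ)
    (hU : U * star U = 1) (hA : A = U * Matrix.diagonal f * star U) {j : ℕ}
    (hj : j ≤ Fintype.card ι) :
    ∑ s ∈ Finset.univ.powersetCard j, mnr A s
      = ∑ s ∈ Finset.univ.powersetCard j, ∏ i ∈ s, f i := by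
  have h1 := coeff_det_poly A hj
  have h2 := coeff_det_poly (Matrix.diagonal f) hj
  rw [hA, det_poly_conj U (star U) (Matrix.diagonal f) hU] at h1
  rw [hA, ← h1, h2]
  exact Finset.sum_congr rfl fun s _ => mnr_diagonal f s

end MatAux
end MatP


namespace Mac

variable {ι : Type*} [DecidableEq ι]

/-- elementary symmetric sum over a finset -/
def E (d : ι → ℝ) (t : Finset ι) (k : ℕ) : ℝ := ∑ s ∈ t.powersetCard k, ∏ i ∈ s, d i

lemma E_nonneg {d : ι → ℝ} (hd : ∀ i, 0 ≤ d i) (t : Finset ι) (k : ℕ) : 0 ≤ E d t k :=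
  Finset.sum_nonneg fun s _ => Finset.prod_nonneg fun i _ => hd i

lemma extraction (h : ι → Finset ι → ℝ) (t : Finset ι) (k : ℕ) :
    ∑ s ∈ t.powersetCard (k+1), ∑ i ∈ s, h i (s.erase i)
      = ∑ i ∈ t, ∑ u ∈ (t.erase i).powersetCard k, h i u := by
  rw [Finset.sum_sigma', Finset.sum_sigma']
  refine Finset.sum_nbij' (fun x => ⟨x.2, x.1.erase x.2⟩) (fun y => ⟨insert y.1 y.2, y.1⟩)
    ?_ ?_ ?_ ?_ ?_
  · rintro ⟨s, i⟩ hx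
    simp only [Finset.mem_sigma, Finset.mem_powersetCard] at hx ⊢
    obtain ⟨⟨hs, hc⟩, hi⟩ := hx
    exact ⟨hs hi, ⟨Finset.erase_subset_erase _ hs, by rw [Finset.card_erase_of_mem hi, hc]; rfl⟩⟩
  · rintro ⟨i, u⟩ hy
    simp only [Finset.mem_sigma, Finset.mem_powersetCard, Finset.subset_erase] at hy ⊢
    obtain ⟨hi, ⟨hu, hiu⟩, hc⟩ := hy
    refine ⟨⟨Finset.insert_subset hi hu, ?_⟩, Finset.mem_insert_self _ _⟩
    rw [Finset.card_insert_of_notMem hiu, hc]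
  · rintro ⟨s, i⟩ hx
    simp only [Finset.mem_sigma] at hx
    simp [Finset.insert_erase hx.2]
  · rintro ⟨i, u⟩ hy
    simp only [Finset.mem_sigma, Finset.mem_powersetCard, Finset.subset_erase] at hy
    simp [Finset.erase_insert_of_ne, Finset.erase_insert hy.2.1.2]
  · rintro ⟨s, i⟩ _; rfl

lemma E_succ (d : ι → ℝ) (t : Finset ι) (k : ℕ) :
    ((k:ℝ)+1) * E d t (k+1) = ∑ i ∈ t, d i * E d (t.erase i) k := by
  have h := extraction (fun i u => d i * ∏ x ∈ u, d x) t k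
  have lhs : ∑ s ∈ t.powersetCard (k+1), ∑ i ∈ s, d i * ∏ x ∈ s.erase i, d x
      = ((k:ℝ)+1) * E d t (k+1) := by
    rw [E, Finset.mul_sum]
    refine Finset.sum_congr rfl fun s hs => ?_
    rw [Finset.mem_powersetCard] at hs
    have : ∀ i ∈ s, d i * ∏ x ∈ s.erase i, d x = ∏ x ∈ s, d x := fun i hi =>
      Finset.mul_prod_erase s d hi
    rw [Finset.sum_congr rfl this, Finset.sum_const, hs.2, nsmul_eq_mul]
    push_cast; ring
  rw [← lhs, h]
  simp [E, Finset.mul_sum]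

lemma E_erase (d : ι → ℝ) {t : Finset ι} {i : ι} (hi : i ∈ t) (k : ℕ) :
    E d t (k+1) = E d (t.erase i) (k+1) + d i * E d (t.erase i) k := by
  classical
  have hsplit : t.powersetCard (k+1) =
      ((t.erase i).powersetCard (k+1)) ∪ ((t.erase i).powersetCard k).image (insert i) := by
    ext s
    simp only [Finset.mem_union, Finset.mem_powersetCard, Finset.mem_image, Finset.subset_erase]
    constructor
    · rintro ⟨hs, hc⟩
      by_cases his : i ∈ s
      · exact Or.inr ⟨s.erase i, ⟨⟨(Finset.erase_subset _ _).trans hs, Finset.notMem_erase _ _⟩,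
          by rw [Finset.card_erase_of_mem his, hc]; rfl⟩, Finset.insert_erase his⟩
      · exact Or.inl ⟨⟨hs, his⟩, hc⟩
    · rintro (⟨⟨hs, _⟩, hc⟩ | ⟨u, ⟨⟨hu, hiu⟩, hc⟩, rfl⟩)
      · exact ⟨hs, hc⟩
      · exact ⟨Finset.insert_subset hi hu, by rw [Finset.card_insert_of_notMem hiu, hc]⟩
  have hdisj : Disjoint ((t.erase i).powersetCard (k+1))
      (((t.erase i).powersetCard k).image (insert i)) := by
    rw [Finset.disjoint_left]
    rintro s hs hs'
    rw [Finset.mem_powersetCard, Finset.subset_erase] at hs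
    obtain ⟨u, hu, rfl⟩ := Finset.mem_image.mp hs'
    exact hs.1.2 (Finset.mem_insert_self _ _)
  rw [E, hsplit, Finset.sum_union hdisj]
  congr 1
  rw [Finset.sum_image, E, Finset.mul_sum]
  · refine Finset.sum_congr rfl fun u hu => ?_
    rw [Finset.mem_powersetCard, Finset.subset_erase] at hu
    rw [Finset.prod_insert hu.1.2]
  · intro u hu v hv huv
    rw [Finset.mem_coe, Finset.mem_powersetCard, Finset.subset_erase] at hu hv
    have := congrArg (Finset.erase · i) huv
    simpa [Finset.erase_insert hu.1.2, Finset.erase_insert hv.1.2] using this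

lemma count_lemma (d : ι → ℝ) (t : Finset ι) (k : ℕ) :
    ∑ j ∈ t, E d (t.erase j) k = ((t.card - k : ℕ) : ℝ) * E d t k := by
  have key : ∀ j ∈ t, E d (t.erase j) k
      = ∑ u ∈ t.powersetCard k, if j ∉ u then ∏ x ∈ u, d x else 0 := by
    intro j hj
    rw [E, ← Finset.sum_filter]
    congr 1
    ext u
    simp [Finset.mem_powersetCard, Finset.subset_erase, Finset.mem_filter, and_assoc, and_comm]
  rw [Finset.sum_congr rfl key, Finset.sum_comm, E, Finset.mul_sum]
  refine Finset.sum_congr rfl fun u hu => ?_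
  rw [Finset.mem_powersetCard] at hu
  rw [← Finset.sum_filter, Finset.sum_const, ← Finset.sdiff_eq_filter,
    Finset.card_sdiff_of_subset hu.1, hu.2, nsmul_eq_mul]


lemma E_zero (d : ι → ℝ) (t : Finset ι) : E d t 0 = 1 := by
  simp [E]

lemma E_one [Fintype ι] (d : ι → ℝ) : E d Finset.univ 1 = ∑ i, d i := by
  have h := E_succ d Finset.univ 0
  simpa [E_zero] using h

lemma E_const [Fintype ι] (a : ℝ) (k : ℕ) :
    E (fun _ => a) (Finset.univ : Finset ι) k = (Fintype.card ι).choose k * a ^ k := by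
  rw [E]
  have : ∀ s ∈ (Finset.univ : Finset ι).powersetCard k, ∏ _i ∈ s, a = a ^ k := by
    intro s hs
    rw [Finset.mem_powersetCard] at hs
    rw [Finset.prod_const, hs.2]
  rw [Finset.sum_congr rfl this, Finset.sum_const, Finset.card_powersetCard, Finset.card_univ,
    nsmul_eq_mul]

section ChainSec

variable [Fintype ι] (d : ι → ℝ)

/-- double sum with weights w i j -/
private def S2 (w : ι → ι → ℝ) (m : ℕ) : ℝ :=
  ∑ i, ∑ j ∈ Finset.univ.erase i, w i j * E d ((Finset.univ.erase i).erase j) m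

lemma hS3 (m : ℕ) : ((m:ℝ)+1) * ((m+2) * E d Finset.univ (m+2)) = S2 d (fun i j => d i * d j) m := by
  have h1 : ((m:ℝ)+1+1) * E d Finset.univ (m+2) = ∑ i, d i * E d (Finset.univ.erase i) (m+1) := by
    have := E_succ d Finset.univ (m+1)
    push_cast at this
    exact this
  have h2 : ∀ i : ι, ((m:ℝ)+1) * E d (Finset.univ.erase i) (m+1)
      = ∑ j ∈ Finset.univ.erase i, d j * E d ((Finset.univ.erase i).erase j) m := fun i =>
    E_succ d (Finset.univ.erase i) m
  calc ((m:ℝ)+1) * ((m+2) * E d Finset.univ (m+2))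
      = ((m:ℝ)+1) * (((m:ℝ)+1+1) * E d Finset.univ (m+2)) := by ring
    _ = ((m:ℝ)+1) * ∑ i, d i * E d (Finset.univ.erase i) (m+1) := by rw [h1]
    _ = ∑ i, d i * (((m:ℝ)+1) * E d (Finset.univ.erase i) (m+1)) := by
        rw [Finset.mul_sum]; exact Finset.sum_congr rfl fun i _ => by ring
    _ = ∑ i, d i * ∑ j ∈ Finset.univ.erase i, d j * E d ((Finset.univ.erase i).erase j) m := by
        exact Finset.sum_congr rfl fun i _ => by rw [h2 i]
    _ = S2 d (fun i j => d i * d j) m := by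
        rw [S2]
        refine Finset.sum_congr rfl fun i _ => ?_
        rw [Finset.mul_sum]
        exact Finset.sum_congr rfl fun j _ => by ring

lemma hcR (m : ℕ) :
    S2 d (fun i j => d i * d i) m
      = ((Fintype.card ι - (m+1) : ℕ) : ℝ) * ∑ i, d i * d i * E d (Finset.univ.erase i) m := by
  rw [S2, Finset.mul_sum]
  refine Finset.sum_congr rfl fun i _ => ?_
  have hc := count_lemma d (Finset.univ.erase i) m
  have hcard : (Finset.univ.erase i).card = Fintype.card ι - 1 := by
    rw [Finset.card_erase_of_mem (Finset.mem_univ i), Finset.card_univ]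
  rw [hcard] at hc
  have : Fintype.card ι - 1 - m = Fintype.card ι - (m+1) := by omega
  rw [this] at hc
  calc ∑ j ∈ Finset.univ.erase i, d i * d i * E d ((Finset.univ.erase i).erase j) m
      = d i * d i * ∑ j ∈ Finset.univ.erase i, E d ((Finset.univ.erase i).erase j) m := by
        rw [Finset.mul_sum]
    _ = d i * d i * (((Fintype.card ι - (m+1) : ℕ) : ℝ) * E d (Finset.univ.erase i) m) := by rw [hc]
    _ = _ := by ring

lemma hswap (m : ℕ) : S2 d (fun i j => d i * d i) m = S2 d (fun i j => d j * d j) m := by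
  rw [S2, S2]
  have key : ∀ w : ι → ι → ℝ, S2 d w m
      = ∑ i, ∑ j, if j ≠ i then w i j * E d ((Finset.univ.erase i).erase j) m else 0 := by
    intro w
    rw [S2]
    refine Finset.sum_congr rfl fun i _ => ?_
    rw [← Finset.sum_filter, Finset.filter_ne']
  rw [← S2, ← S2, key, key, Finset.sum_comm]
  refine Finset.sum_congr rfl fun i _ => Finset.sum_congr rfl fun j _ => ?_
  rcases eq_or_ne i j with rfl | hij
  · simp
  · rw [if_pos hij.symm, if_pos hij, Finset.erase_right_comm]

lemma S2_le (hd : ∀ i, 0 ≤ d i) (m : ℕ) :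
    2 * S2 d (fun i j => d i * d j) m
      ≤ S2 d (fun i j => d i * d i) m + S2 d (fun i j => d j * d j) m := by
  rw [S2, S2, S2, ← Finset.sum_add_distrib, Finset.mul_sum]
  refine Finset.sum_le_sum fun i _ => ?_
  rw [← Finset.sum_add_distrib, Finset.mul_sum]
  refine Finset.sum_le_sum fun j _ => ?_
  have hE := E_nonneg hd ((Finset.univ.erase i).erase j) m
  nlinarith [sq_nonneg (d i - d j)]

lemma S2_lt (hd : ∀ i, 0 ≤ d i) (m : ℕ) {a b : ι} (hab : a ≠ b) (hd2 : d a ≠ d b)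
    (hE : 0 < E d ((Finset.univ.erase a).erase b) m) :
    2 * S2 d (fun i j => d i * d j) m
      < S2 d (fun i j => d i * d i) m + S2 d (fun i j => d j * d j) m := by
  rw [S2, S2, S2, ← Finset.sum_add_distrib, Finset.mul_sum]
  refine Finset.sum_lt_sum (fun i _ => ?_) ⟨a, Finset.mem_univ a, ?_⟩
  · rw [← Finset.sum_add_distrib, Finset.mul_sum]
    refine Finset.sum_le_sum fun j _ => ?_
    have hE := E_nonneg hd ((Finset.univ.erase i).erase j) m
    nlinarith [sq_nonneg (d i - d j)]
  · rw [← Finset.sum_add_distrib, Finset.mul_sum]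
    refine Finset.sum_lt_sum (fun j _ => ?_) ⟨b, Finset.mem_erase.mpr ⟨hab.symm, Finset.mem_univ b⟩, ?_⟩
    · have hE := E_nonneg hd ((Finset.univ.erase a).erase j) m
      nlinarith [sq_nonneg (d a - d j)]
    · have hne : d a - d b ≠ 0 := sub_ne_zero.mpr hd2
      nlinarith [mul_pos (by positivity : (0:ℝ) < (d a - d b)^2) hE]


lemma chain_eq (m : ℕ) :
    E d Finset.univ 1 * E d Finset.univ (m+1)
      = ((m:ℝ)+2) * E d Finset.univ (m+2) + ∑ i, d i * d i * E d (Finset.univ.erase i) m := by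
  have h0 : E d Finset.univ 1 * E d Finset.univ (m+1) = ∑ i, d i * E d Finset.univ (m+1) := by
    rw [E_one, Finset.sum_mul]
  have h1 : ∀ i : ι, E d Finset.univ (m+1)
      = E d (Finset.univ.erase i) (m+1) + d i * E d (Finset.univ.erase i) m := fun i =>
    E_erase d (Finset.mem_univ i) m
  have h2 : ((m:ℝ)+1+1) * E d Finset.univ (m+2) = ∑ i, d i * E d (Finset.univ.erase i) (m+1) := by
    have := E_succ d Finset.univ (m+1); push_cast at this; exact this
  calc E d Finset.univ 1 * E d Finset.univ (m+1)
      = ∑ i, d i * (E d (Finset.univ.erase i) (m+1) + d i * E d (Finset.univ.erase i) m) := by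
        rw [h0]; exact Finset.sum_congr rfl fun i _ => by rw [← h1 i]
    _ = (∑ i, d i * E d (Finset.univ.erase i) (m+1))
          + ∑ i, d i * d i * E d (Finset.univ.erase i) m := by
        rw [← Finset.sum_add_distrib]; exact Finset.sum_congr rfl fun i _ => by ring
    _ = _ := by rw [← h2]; ring

lemma chain_le (hd : ∀ i, 0 ≤ d i) (m : ℕ) (hm : m + 2 ≤ Fintype.card ι) :
    (Fintype.card ι : ℝ) * (((m:ℝ)+2) * E d Finset.univ (m+2))
      ≤ ((Fintype.card ι - (m+1) : ℕ) : ℝ) * (E d Finset.univ 1 * E d Finset.univ (m+1)) := by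
  set N := Fintype.card ι with hNdef
  set c : ℕ := N - (m+1) with hcdef
  have hS := S2_le d hd m
  have hsw := hswap d m
  have h3 := hS3 d m
  have hR := hcR d m
  have hcast : (c:ℝ) + ((m:ℝ)+1) = N := by
    have : c + (m+1) = N := by omega
    calc (c:ℝ) + ((m:ℝ)+1) = ((c + (m+1) : ℕ) : ℝ) := by push_cast; ring
      _ = N := by rw [this]
  have hkey : ((m:ℝ)+1) * (((m:ℝ)+2) * E d Finset.univ (m+2))
      ≤ (c:ℝ) * ∑ i, d i * d i * E d (Finset.univ.erase i) m := by
    rw [h3, ← hR]; linarith [hS, hsw]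
  calc (N:ℝ) * (((m:ℝ)+2) * E d Finset.univ (m+2))
      = ((c:ℝ) + ((m:ℝ)+1)) * (((m:ℝ)+2) * E d Finset.univ (m+2)) := by rw [hcast]
    _ = (c:ℝ) * (((m:ℝ)+2) * E d Finset.univ (m+2))
          + ((m:ℝ)+1) * (((m:ℝ)+2) * E d Finset.univ (m+2)) := by ring
    _ ≤ (c:ℝ) * (((m:ℝ)+2) * E d Finset.univ (m+2))
          + (c:ℝ) * ∑ i, d i * d i * E d (Finset.univ.erase i) m := by linarith
    _ = (c:ℝ) * (E d Finset.univ 1 * E d Finset.univ (m+1)) := by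
        rw [chain_eq d m]; ring

lemma chain_lt (hd : ∀ i, 0 ≤ d i) (m : ℕ) (hm : m + 2 ≤ Fintype.card ι)
    {a b : ι} (hab : a ≠ b) (hd2 : d a ≠ d b)
    (hE : 0 < E d ((Finset.univ.erase a).erase b) m) :
    (Fintype.card ι : ℝ) * (((m:ℝ)+2) * E d Finset.univ (m+2))
      < ((Fintype.card ι - (m+1) : ℕ) : ℝ) * (E d Finset.univ 1 * E d Finset.univ (m+1)) := by
  set N := Fintype.card ι with hNdef
  set c : ℕ := N - (m+1) with hcdef
  have hS := S2_lt d hd m hab hd2 hE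
  have hsw := hswap d m
  have h3 := hS3 d m
  have hR := hcR d m
  have hcast : (c:ℝ) + ((m:ℝ)+1) = N := by
    have : c + (m+1) = N := by omega
    calc (c:ℝ) + ((m:ℝ)+1) = ((c + (m+1) : ℕ) : ℝ) := by push_cast; ring
      _ = N := by rw [this]
  have hkey : ((m:ℝ)+1) * (((m:ℝ)+2) * E d Finset.univ (m+2))
      < (c:ℝ) * ∑ i, d i * d i * E d (Finset.univ.erase i) m := by
    rw [h3, ← hR]; linarith [hS, hsw]
  calc (N:ℝ) * (((m:ℝ)+2) * E d Finset.univ (m+2))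
      = (c:ℝ) * (((m:ℝ)+2) * E d Finset.univ (m+2))
          + ((m:ℝ)+1) * (((m:ℝ)+2) * E d Finset.univ (m+2)) := by rw [← hcast]; ring
    _ < (c:ℝ) * (((m:ℝ)+2) * E d Finset.univ (m+2))
          + (c:ℝ) * ∑ i, d i * d i * E d (Finset.univ.erase i) m := by linarith
    _ = (c:ℝ) * (E d Finset.univ 1 * E d Finset.univ (m+1)) := by
        rw [chain_eq d m]; ring

lemma upper_aux (hd : ∀ i, 0 ≤ d i) (m : ℕ) (hm : m + 2 ≤ Fintype.card ι)
    {μ : ℝ} (hμ : ∑ i, d i = (Fintype.card ι : ℝ) * μ) (hμ0 : 0 ≤ μ)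
    (hIH : E d Finset.univ (m+1) ≤ ((Fintype.card ι).choose (m+1) : ℝ) * μ ^ (m+1)) :
    ((Fintype.card ι - (m+1) : ℕ) : ℝ) * (E d Finset.univ 1 * E d Finset.univ (m+1))
      ≤ (Fintype.card ι : ℝ) * (((m:ℝ)+2) * (((Fintype.card ι).choose (m+2) : ℝ) * μ ^ (m+2))) := by
  set N := Fintype.card ι
  set c : ℕ := N - (m+1)
  have hE1 : E d Finset.univ 1 = (N:ℝ) * μ := by rw [E_one, hμ]
  have hid : ((N.choose (m+2)):ℝ) * ((m:ℝ)+2) = ((N.choose (m+1)):ℝ) * (c:ℝ) := by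
    have h := Nat.choose_succ_right_eq N (m+1)
    have : N.choose (m+2) * (m+2) = N.choose (m+1) * c := h
    calc ((N.choose (m+2)):ℝ) * ((m:ℝ)+2) = ((N.choose (m+2) * (m+2) : ℕ) : ℝ) := by
          push_cast; ring
      _ = ((N.choose (m+1) * c : ℕ) : ℝ) := by rw [this]
      _ = _ := by push_cast; ring
  have h1 : ((c:ℕ):ℝ) * (E d Finset.univ 1 * E d Finset.univ (m+1))
      ≤ (c:ℝ) * ((N:ℝ) * μ * (((N.choose (m+1)):ℝ) * μ ^ (m+1))) := by
    rw [hE1]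
    have hNμ : 0 ≤ (N:ℝ) * μ := by positivity
    have := mul_le_mul_of_nonneg_left hIH hNμ
    have hc0 : (0:ℝ) ≤ (c:ℝ) := Nat.cast_nonneg c
    nlinarith
  refine h1.trans (le_of_eq ?_)
  have hpow : μ ^ (m+2) = μ ^ (m+1) * μ := by ring
  rw [hpow]
  linear_combination (-(N:ℝ) * μ ^ (m+1) * μ) * hid

lemma maclaurin_le (hd : ∀ i, 0 ≤ d i) {μ : ℝ} (hμ : ∑ i, d i = (Fintype.card ι : ℝ) * μ)
    (hμ0 : 0 ≤ μ) :
    ∀ k : ℕ, 1 ≤ k → k ≤ Fintype.card ι →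
      E d Finset.univ k ≤ ((Fintype.card ι).choose k : ℝ) * μ ^ k := by
  intro k
  induction k with
  | zero => intro h; omega
  | succ k ih =>
    intro _ hk1
    rcases Nat.eq_or_lt_of_le (Nat.one_le_iff_ne_zero.mpr (Nat.succ_ne_zero k)) with h1 | h1
    · -- k + 1 = 1
      have hk0 : k = 0 := by omega
      subst hk0
      rw [E_one, hμ, Nat.choose_one_right, pow_one]
    · -- k ≥ 1
      obtain ⟨m, rfl⟩ : ∃ m, k = m + 1 := ⟨k - 1, by omega⟩
      have hm2 : m + 2 ≤ Fintype.card ι := hk1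
      have hIH := ih (by omega) (by omega)
      have hc := chain_le d hd m hm2
      have hu := upper_aux d hd m hm2 hμ hμ0 hIH
      have hN : (0:ℝ) < (Fintype.card ι : ℝ) := by
        have : 0 < Fintype.card ι := by omega
        exact_mod_cast this
      have hm0 : (0:ℝ) < (m:ℝ) + 2 := by positivity
      have := hc.trans hu
      have h2 := (mul_le_mul_iff_right₀ hN).mp this
      exact (mul_le_mul_iff_right₀ hm0).mp h2

lemma maclaurin_lt (hd : ∀ i, 0 ≤ d i) {μ : ℝ} (hμ : ∑ i, d i = (Fintype.card ι : ℝ) * μ)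
    (hμ0 : 0 ≤ μ) {a b : ι} (hd2 : d a ≠ d b) (m : ℕ) (hm : m + 2 ≤ Fintype.card ι) :
    E d Finset.univ (m+2) < ((Fintype.card ι).choose (m+2) : ℝ) * μ ^ (m+2) := by
  classical
  set N := Fintype.card ι
  have hab : a ≠ b := fun h => hd2 (congrArg d h)
  have hμpos : 0 < μ := by
    have hsum : 0 < ∑ i, d i := by
      have : ∃ i, 0 < d i := by
        rcases lt_or_eq_of_le (hd a) with ha | ha
        · exact ⟨a, ha⟩
        · rcases lt_or_eq_of_le (hd b) with hb | hb
          · exact ⟨b, hb⟩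
          · exact absurd (ha.symm.trans hb) hd2
      obtain ⟨i, hi⟩ := this
      exact Finset.sum_pos' (fun i _ => hd i) ⟨i, Finset.mem_univ i, hi⟩
    rw [hμ] at hsum
    by_contra h
    push_neg at h
    have : (N:ℝ) * μ ≤ 0 := mul_nonpos_of_nonneg_of_nonpos (Nat.cast_nonneg N) h
    linarith
  set P := Finset.univ.filter (fun i => 0 < d i) with hP
  by_cases hcard : m + 2 ≤ P.card
  · -- enough positive entries: strict via chain_lt
    have hsub : m ≤ ((P.erase a).erase b).card := by
      have h1 : P.card - 2 ≤ ((P.erase a).erase b).card := by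
        have e1 : (P.erase a).card ≥ P.card - 1 := Finset.pred_card_le_card_erase
        have e2 : ((P.erase a).erase b).card ≥ (P.erase a).card - 1 :=
          Finset.pred_card_le_card_erase
        omega
      omega
    obtain ⟨u, hu, hucard⟩ := Finset.exists_subset_card_eq hsub
    have hE : 0 < E d ((Finset.univ.erase a).erase b) m := by
      have humem : u ∈ ((Finset.univ.erase a).erase b).powersetCard m := by
        rw [Finset.mem_powersetCard]
        refine ⟨hu.trans ?_, hucard⟩
        exact Finset.erase_subset_erase _ (Finset.erase_subset_erase _ (Finset.filter_subset _ _))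
      have hprod : 0 < ∏ i ∈ u, d i := by
        refine Finset.prod_pos fun i hi => ?_
        have hiP : i ∈ P := ((Finset.erase_subset _ _).trans (Finset.erase_subset _ _)) (hu hi)
        exact (Finset.mem_filter.mp hiP).2
      refine lt_of_lt_of_le hprod ?_
      rw [E]
      exact Finset.single_le_sum (f := fun s => ∏ i ∈ s, d i)
        (fun s _ => Finset.prod_nonneg fun i _ => hd i) humem
    have hc := chain_lt d hd m hm hab hd2 hE
    have hu2 := upper_aux d hd m hm hμ hμ0 (maclaurin_le d hd hμ hμ0 (m+1) (by omega) (by omega))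
    have hN : (0:ℝ) < (N : ℝ) := by
      have : 0 < N := by omega
      exact_mod_cast this
    have hm0 : (0:ℝ) < (m:ℝ) + 2 := by positivity
    have := hc.trans_le hu2
    have h2 := (mul_lt_mul_iff_right₀ hN).mp this
    exact (mul_lt_mul_iff_right₀ hm0).mp h2
  · -- few positive entries: E = 0 < RHS
    have hE0 : E d Finset.univ (m+2) = 0 := by
      rw [E]
      refine Finset.sum_eq_zero fun s hs => ?_
      rw [Finset.mem_powersetCard] at hs
      by_contra h
      have hpos : ∀ i ∈ s, 0 < d i := by
        intro i hi
        rcases lt_or_eq_of_le (hd i) with h' | h'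
        · exact h'
        · exact absurd (Finset.prod_eq_zero hi h'.symm) h
      have : s ⊆ P := fun i hi => Finset.mem_filter.mpr ⟨Finset.mem_univ i, hpos i hi⟩
      have := Finset.card_le_card this
      omega
    rw [hE0]
    have : 0 < N.choose (m+2) := Nat.choose_pos hm
    positivity

end ChainSec

end Mac


end AuxProofs

open ComplexOrder in
/-- **Maclaurin–Newton inequality** (formula (3.2)): for every positive semidefinite
Hermitian `(n+1) × (n+1)` matrix `A` and every `j = 2, …, n+1`,
`σ_j(A) ≤ C(n+1, j) (trace A / (n+1))^j`, with equality iff `A` is a scalar multiple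
of the identity. -/
theorem stmt9 (n j : ℕ) (hj1 : 2 ≤ j) (hj2 : j ≤ n + 1)
    (A : Matrix (Fin (n + 1)) (Fin (n + 1)) ℂ) (hA : A.PosSemidef) :
    (esymm j A).re ≤ ((n + 1).choose j : ℝ) * ((A.trace).re / (n + 1)) ^ j ∧
      ((esymm j A).re = ((n + 1).choose j : ℝ) * ((A.trace).re / (n + 1)) ^ j ↔
        ∃ c : ℝ, A = (c : ℂ) • 1) := by
  classical
  have hH : A.IsHermitian := hA.1
  set eig : Fin (n+1) → ℝ := hH.eigenvalues with heig
  have heignn : ∀ i, 0 ≤ eig i := fun i => hA.eigenvalues_nonneg i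
  set V : Matrix (Fin (n+1)) (Fin (n+1)) ℂ :=
    (Matrix.IsHermitian.eigenvectorUnitary hH : Matrix (Fin (n+1)) (Fin (n+1)) ℂ) with hV
  have hU1 : V * star V = 1 :=
    Matrix.mem_unitaryGroup_iff.mp (Matrix.IsHermitian.eigenvectorUnitary hH).2
  have hU2 : star V * V = 1 :=
    Matrix.mem_unitaryGroup_iff'.mp (Matrix.IsHermitian.eigenvectorUnitary hH).2
  have hspec : A = V * Matrix.diagonal (fun i => ((eig i : ℝ) : ℂ)) * star V :=
    hH.spectral_theorem
  have hcard : Fintype.card (Fin (n+1)) = n + 1 := Fintype.card_fin _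
  have hesymm : esymm j A = ((Mac.E eig Finset.univ j : ℝ) : ℂ) := by
    have h1 : esymm j A = ∑ s ∈ Finset.univ.powersetCard j, MatAux.mnr A s := rfl
    have h2 := MatAux.sum_mnr_conj_diag V A (fun i => ((eig i : ℝ) : ℂ)) hU1 hspec
      (j := j) (le_of_le_of_eq hj2 hcard.symm)
    rw [h1, h2, Mac.E]
    push_cast
    rfl
  have htrre : A.trace.re = ∑ i, eig i := by
    have ht : A.trace = Matrix.trace (Matrix.diagonal (fun i => ((eig i : ℝ) : ℂ))) := by
      calc A.trace = Matrix.trace (V * Matrix.diagonal (fun i => ((eig i : ℝ) : ℂ)) * star V) := by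
            rw [← hspec]
        _ = Matrix.trace (star V * V * Matrix.diagonal (fun i => ((eig i : ℝ) : ℂ))) :=
            Matrix.trace_mul_cycle V _ (star V)
        _ = _ := by rw [hU2, one_mul]
    rw [ht, Matrix.trace_diagonal]
    have : (∑ i, ((eig i : ℝ) : ℂ)) = (((∑ i, eig i : ℝ)) : ℂ) := by push_cast; rfl
    rw [this, Complex.ofReal_re]
  have hre : (esymm j A).re = Mac.E eig Finset.univ j := by rw [hesymm, Complex.ofReal_re]
  have hμ0 : 0 ≤ A.trace.re / (n+1) := by
    rw [htrre]
    have : 0 ≤ ∑ i, eig i := Finset.sum_nonneg fun i _ => heignn i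
    positivity
  have hμeq : ∑ i, eig i = (Fintype.card (Fin (n+1)) : ℝ) * (A.trace.re / (n+1)) := by
    rw [hcard, htrre]
    field_simp
    push_cast; ring
  have hle := Mac.maclaurin_le eig heignn hμeq hμ0 j (by omega) (by rw [hcard]; exact hj2)
  rw [hcard] at hle
  refine ⟨by rw [hre]; exact hle, ?_, ?_⟩
  · intro heq
    by_cases hconst : ∀ a b : Fin (n+1), eig a = eig b
    · refine ⟨eig 0, ?_⟩
      have hdiag : Matrix.diagonal (fun i => ((eig i : ℝ) : ℂ))
          = ((eig 0 : ℝ) : ℂ) • (1 : Matrix (Fin (n+1)) (Fin (n+1)) ℂ) := by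
        rw [Matrix.smul_one_eq_diagonal]
        refine congrArg Matrix.diagonal (funext fun i => ?_)
        rw [hconst i 0]
      rw [hspec, hdiag, mul_smul_comm, mul_one, Matrix.smul_mul, hU1]
    · exfalso
      push_neg at hconst
      obtain ⟨a, b, hne⟩ := hconst
      obtain ⟨m, rfl⟩ : ∃ m, j = m + 2 := ⟨j - 2, by omega⟩
      have hlt := Mac.maclaurin_lt eig heignn hμeq hμ0 hne m (by rw [hcard]; omega)
      rw [hcard] at hlt
      rw [hre] at heq
      linarith
  · rintro ⟨c, rfl⟩
    have h1 : esymm j ((c : ℂ) • (1 : Matrix (Fin (n+1)) (Fin (n+1)) ℂ))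
        = ((n+1).choose j : ℂ) * (c : ℂ) ^ j := by
      rw [esymm]
      have hterm : ∀ s ∈ (Finset.univ : Finset (Fin (n+1))).powersetCard j,
          Matrix.det (Matrix.of fun p q : {i // i ∈ s} =>
            ((c : ℂ) • (1 : Matrix (Fin (n+1)) (Fin (n+1)) ℂ)) p.1 q.1) = (c : ℂ) ^ j := by
        intro s hs
        rw [Finset.mem_powersetCard] at hs
        have hmat : (Matrix.of fun p q : {i // i ∈ s} =>
            ((c : ℂ) • (1 : Matrix (Fin (n+1)) (Fin (n+1)) ℂ)) p.1 q.1)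
            = (c : ℂ) • (1 : Matrix {i // i ∈ s} {i // i ∈ s} ℂ) := by
          ext p q
          by_cases h : p = q
          · subst h; simp
          · have hpq : p.1 ≠ q.1 := fun hc => h (Subtype.ext hc)
            simp [Matrix.one_apply, hpq, h]
        rw [hmat, Matrix.det_smul, Matrix.det_one, mul_one, Fintype.card_coe, hs.2]
      rw [Finset.sum_congr rfl hterm, Finset.sum_const, Finset.card_powersetCard,
        Finset.card_univ, hcard, nsmul_eq_mul]
    have h2 : ((c : ℂ) • (1 : Matrix (Fin (n+1)) (Fin (n+1)) ℂ)).trace.re = c * (n+1) := by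
      rw [Matrix.trace_smul, Matrix.trace_one, hcard]
      have : (c : ℂ) • ((n+1 : ℕ) : ℂ) = (((c * (n+1) : ℝ)) : ℂ) := by
        push_cast
        rw [smul_eq_mul]
      rw [this, Complex.ofReal_re]
    have h3 : (esymm j ((c : ℂ) • (1 : Matrix (Fin (n+1)) (Fin (n+1)) ℂ))).re
        = ((n+1).choose j : ℝ) * c ^ j := by
      rw [h1]
      have : ((n+1).choose j : ℂ) * (c : ℂ) ^ j = (((((n+1).choose j : ℝ)) * c ^ j : ℝ) : ℂ) := by
        push_cast; ring
      rw [this, Complex.ofReal_re]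
    rw [h3, h2]
    have hne : ((n : ℝ) + 1) ≠ 0 := by positivity
    rw [show c * ((n:ℝ)+1) / ((n:ℝ)+1) = c from by field_simp]

end
end
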